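/- Let S ⊆ {-1,0,1}^n, let ε ≤ dist(S, convex), and let ℓ = √(2n·ln(8/ε)). Then the number of points of Mid(ℓ) not in S but lying in the convex hull of S ∩ Mid(ℓ) is at least (ε/2)·3^n. -/

import Mathlib

/-- The ternary hypercube `{-1,0,1}^n` as a subset of `ℝ^n`. -/
def ternarySet (n : ℕ) : Set (Fin n → ℝ) :=
  {x | ∀ i, x i = -1 ∨ x i = 0 ∨ x i = 1}

/-- The middle layers `Mid(ℓ) = {x ∈ {-1,0,1}^n : |‖x‖₁ − 2n/3| ≤ ℓ}`. -/
def midLayers (n : ℕ) (ℓ : ℝ) : Set (Fin n → ℝ) :=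
  {x ∈ ternarySet n | |(∑ i, abs (x i)) - 2 * n / 3| ≤ ℓ}

lemma equad {s : ℝ} (hs : |s| ≤ 1) : Real.exp s ≤ 1 + s + s ^ 2 := by
  have h := Real.exp_bound hs (n := 3) (by norm_num)
  have h1 : |s| ^ 3 ≤ s ^ 2 := by
    calc |s| ^ 3 ≤ |s| ^ 2 := pow_le_pow_of_le_one (abs_nonneg s) hs (by norm_num)
      _ = s ^ 2 := sq_abs s
  have h2 := (abs_sub_le_iff.1 h).1
  simp [Finset.sum_range_succ, Nat.factorial] at h2
  nlinarith [h2, h1]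

noncomputable def ternF (n : ℕ) : Finset (Fin n → ℝ) :=
  Fintype.piFinset (fun _ => ({-1,0,1} : Finset ℝ))

lemma mem_ternF {n : ℕ} {x : Fin n → ℝ} : x ∈ ternF n ↔ x ∈ ternarySet n := by
  simp [ternF, ternarySet, Fintype.mem_piFinset]

lemma coe_ternF (n : ℕ) : (ternF n : Set (Fin n → ℝ)) = ternarySet n :=
  Set.ext fun _ => mem_ternF

lemma card_ternF (n : ℕ) : (ternF n).card = 3 ^ n := by
  rw [ternF, Fintype.card_piFinset]
  have h : ({-1,0,1} : Finset ℝ).card = 3 := by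
    rw [Finset.card_insert_of_notMem (by norm_num), Finset.card_insert_of_notMem (by norm_num),
      Finset.card_singleton]
  simp [h]

lemma tern_finite (n : ℕ) : (ternarySet n).Finite := by
  rw [← coe_ternF]; exact (ternF n).finite_toSet

lemma ncard_tern (n : ℕ) : (ternarySet n).ncard = 3 ^ n := by
  rw [← coe_ternF, Set.ncard_coe_finset, card_ternF]

lemma sum_abs_bounds {n : ℕ} {x : Fin n → ℝ} (hx : x ∈ ternarySet n) :
    0 ≤ ∑ i, |x i| ∧ (∑ i, |x i|) ≤ n := by
  constructor
  · exact Finset.sum_nonneg fun i _ => abs_nonneg _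
  · have h1 : ∀ i, |x i| ≤ 1 := by
      intro i; rcases hx i with h | h | h <;> rw [h] <;> norm_num
    calc (∑ i, |x i|) ≤ ∑ _i : Fin n, (1 : ℝ) := Finset.sum_le_sum fun i _ => h1 i
      _ = (n : ℝ) := by simp

lemma sum_prod (n : ℕ) (g : ℝ → ℝ) :
    ∑ x ∈ ternF n, ∏ i, g (x i) = (g (-1) + g 0 + g 1) ^ n := by
  rw [ternF, ← Finset.prod_univ_sum]
  have h : ∑ a ∈ ({-1,0,1} : Finset ℝ), g a = g (-1) + g 0 + g 1 := by
    rw [Finset.sum_insert (by norm_num), Finset.sum_insert (by norm_num), Finset.sum_singleton]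
    ring
  simp [h]

lemma mgf_sum (n : ℕ) (t : ℝ) :
    ∑ x ∈ ternF n, Real.exp (t * ∑ i, |x i|) = (1 + 2 * Real.exp t) ^ n := by
  have h := sum_prod n (fun a => Real.exp (t * |a|))
  simp only [abs_neg, abs_one, abs_zero, mul_one, mul_zero, Real.exp_zero] at h
  calc ∑ x ∈ ternF n, Real.exp (t * ∑ i, |x i|)
      = ∑ x ∈ ternF n, ∏ i, Real.exp (t * |x i|) := by
        refine Finset.sum_congr rfl fun x _ => ?_
        rw [Finset.mul_sum, Real.exp_sum]
    _ = (Real.exp t + 1 + Real.exp t) ^ n := h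
    _ = (1 + 2 * Real.exp t) ^ n := by ring

lemma upper_tail (n : ℕ) (t c : ℝ) (ht : 0 ≤ t) :
    (((ternF n).filter (fun x => c < ∑ i, |x i|)).card : ℝ)
      ≤ Real.exp (-(t * c)) * (1 + 2 * Real.exp t) ^ n := by
  rw [← mgf_sum, Finset.mul_sum]
  calc (((ternF n).filter (fun x => c < ∑ i, |x i|)).card : ℝ)
      = ∑ _x ∈ (ternF n).filter (fun x => c < ∑ i, |x i|), (1 : ℝ) := by simp
    _ ≤ ∑ x ∈ (ternF n).filter (fun x => c < ∑ i, |x i|),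
          Real.exp (-(t * c)) * Real.exp (t * ∑ i, |x i|) := by
        refine Finset.sum_le_sum fun x hx => ?_
        rw [← Real.exp_add]
        refine Real.one_le_exp ?_
        have hc := (Finset.mem_filter.1 hx).2
        nlinarith
    _ ≤ ∑ x ∈ ternF n, Real.exp (-(t * c)) * Real.exp (t * ∑ i, |x i|) := by
        refine Finset.sum_le_sum_of_subset_of_nonneg (Finset.filter_subset _ _) fun x _ _ => ?_
        positivity

lemma lower_tail (n : ℕ) (t c : ℝ) (ht : 0 ≤ t) :
    (((ternF n).filter (fun x => (∑ i, |x i|) < c)).card : ℝ)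
      ≤ Real.exp (t * c) * (1 + 2 * Real.exp (-t)) ^ n := by
  rw [← mgf_sum, Finset.mul_sum]
  calc (((ternF n).filter (fun x => (∑ i, |x i|) < c)).card : ℝ)
      = ∑ _x ∈ (ternF n).filter (fun x => (∑ i, |x i|) < c), (1 : ℝ) := by simp
    _ ≤ ∑ x ∈ (ternF n).filter (fun x => (∑ i, |x i|) < c),
          Real.exp (t * c) * Real.exp (-t * ∑ i, |x i|) := by
        refine Finset.sum_le_sum fun x hx => ?_
        rw [← Real.exp_add]
        refine Real.one_le_exp ?_
        have hc := (Finset.mem_filter.1 hx).2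
        nlinarith
    _ ≤ ∑ x ∈ ternF n, Real.exp (t * c) * Real.exp (-t * ∑ i, |x i|) := by
        refine Finset.sum_le_sum_of_subset_of_nonneg (Finset.filter_subset _ _) fun x _ _ => ?_
        positivity

lemma mgf_upper {t : ℝ} (ht : 0 ≤ t) (ht1 : t ≤ 1) :
    1 + 2 * Real.exp t ≤ 3 * Real.exp (2 * t / 3 + 2 * t ^ 2 / 9) := by
  have e1 : Real.exp (-(2 * t / 3)) ≤ 1 - 2 * t / 3 + 4 * t ^ 2 / 9 := by
    have := equad (s := -(2 * t / 3)) (by rw [abs_neg, abs_of_nonneg (by linarith)]; linarith)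
    nlinarith
  have e2 : Real.exp (t / 3) ≤ 1 + t / 3 + t ^ 2 / 9 := by
    have := equad (s := t / 3) (by rw [abs_of_nonneg (by linarith)]; linarith)
    nlinarith
  have hfac : 1 + 2 * Real.exp t
      = Real.exp (2 * t / 3) * (Real.exp (-(2 * t / 3)) + 2 * Real.exp (t / 3)) := by
    have a1 : Real.exp (2 * t / 3) * Real.exp (-(2 * t / 3)) = 1 := by
      rw [← Real.exp_add]; simp
    have a2 : Real.exp (2 * t / 3) * Real.exp (t / 3) = Real.exp t := by
      rw [← Real.exp_add]; congr 1; ring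
    linear_combination -a1 - 2 * a2
  have h3 : (3 : ℝ) + 2 * t ^ 2 / 3 ≤ 3 * Real.exp (2 * t ^ 2 / 9) := by
    have := Real.add_one_le_exp (2 * t ^ 2 / 9)
    nlinarith [Real.exp_pos (2 * t ^ 2 / 9)]
  calc 1 + 2 * Real.exp t
      = Real.exp (2 * t / 3) * (Real.exp (-(2 * t / 3)) + 2 * Real.exp (t / 3)) := hfac
    _ ≤ Real.exp (2 * t / 3) * (3 + 2 * t ^ 2 / 3) := by
        refine mul_le_mul_of_nonneg_left (by linarith) (Real.exp_pos _).le
    _ ≤ Real.exp (2 * t / 3) * (3 * Real.exp (2 * t ^ 2 / 9)) := by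
        refine mul_le_mul_of_nonneg_left h3 (Real.exp_pos _).le
    _ = 3 * Real.exp (2 * t / 3 + 2 * t ^ 2 / 9) := by rw [Real.exp_add]; ring

lemma mgf_lower {t : ℝ} (ht : 0 ≤ t) (ht1 : t ≤ 1) :
    1 + 2 * Real.exp (-t) ≤ 3 * Real.exp (-(2 * t / 3) + 2 * t ^ 2 / 9) := by
  have e1 : Real.exp (2 * t / 3) ≤ 1 + 2 * t / 3 + 4 * t ^ 2 / 9 := by
    have := equad (s := 2 * t / 3) (by rw [abs_of_nonneg (by linarith)]; linarith)
    nlinarith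
  have e2 : Real.exp (-(t / 3)) ≤ 1 - t / 3 + t ^ 2 / 9 := by
    have := equad (s := -(t / 3)) (by rw [abs_neg, abs_of_nonneg (by linarith)]; linarith)
    nlinarith
  have hfac : 1 + 2 * Real.exp (-t)
      = Real.exp (-(2 * t / 3)) * (Real.exp (2 * t / 3) + 2 * Real.exp (-(t / 3))) := by
    have a1 : Real.exp (-(2 * t / 3)) * Real.exp (2 * t / 3) = 1 := by
      rw [← Real.exp_add]; simp
    have a2 : Real.exp (-(2 * t / 3)) * Real.exp (-(t / 3)) = Real.exp (-t) := by
      rw [← Real.exp_add]; congr 1; ring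
    linear_combination -a1 - 2 * a2
  have h3 : (3 : ℝ) + 2 * t ^ 2 / 3 ≤ 3 * Real.exp (2 * t ^ 2 / 9) := by
    have := Real.add_one_le_exp (2 * t ^ 2 / 9)
    nlinarith [Real.exp_pos (2 * t ^ 2 / 9)]
  calc 1 + 2 * Real.exp (-t)
      = Real.exp (-(2 * t / 3)) * (Real.exp (2 * t / 3) + 2 * Real.exp (-(t / 3))) := hfac
    _ ≤ Real.exp (-(2 * t / 3)) * (3 + 2 * t ^ 2 / 3) := by
        refine mul_le_mul_of_nonneg_left (by linarith) (Real.exp_pos _).le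
    _ ≤ Real.exp (-(2 * t / 3)) * (3 * Real.exp (2 * t ^ 2 / 9)) := by
        refine mul_le_mul_of_nonneg_left h3 (Real.exp_pos _).le
    _ = 3 * Real.exp (-(2 * t / 3) + 2 * t ^ 2 / 9) := by rw [Real.exp_add]; ring

lemma tail_card (n : ℕ) (hn : 0 < n) (ℓ : ℝ) (hℓ0 : 0 ≤ ℓ) (hℓn : ℓ ≤ (n : ℝ)) :
    (((ternF n).filter (fun x => ¬ |(∑ i, |x i|) - 2 * (n:ℝ) / 3| ≤ ℓ)).card : ℝ)
      ≤ 2 * Real.exp (-ℓ ^ 2 / (2 * n)) * 3 ^ n := by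
  have hnn : (0 : ℝ) < n := by exact_mod_cast hn
  set t : ℝ := ℓ / n with htdef
  have ht0 : 0 ≤ t := div_nonneg hℓ0 hnn.le
  have ht1 : t ≤ 1 := by rw [htdef, div_le_one hnn]; exact hℓn
  have hmain : ∀ (e a : ℝ), e + n * a ≤ -ℓ ^ 2 / (2 * n) →
      Real.exp e * (3 * Real.exp a) ^ n ≤ Real.exp (-ℓ ^ 2 / (2 * n)) * 3 ^ n := by
    intro e a h
    rw [mul_pow, ← Real.exp_nat_mul]
    calc Real.exp e * ((3:ℝ) ^ n * Real.exp (n * a))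
        = Real.exp (e + n * a) * 3 ^ n := by rw [Real.exp_add]; ring
      _ ≤ Real.exp (-ℓ ^ 2 / (2 * n)) * 3 ^ n := by
          have := Real.exp_le_exp.2 h
          gcongr
  have hsplit : (ternF n).filter (fun x => ¬ |(∑ i, |x i|) - 2 * (n:ℝ) / 3| ≤ ℓ)
      ⊆ (ternF n).filter (fun x => 2 * (n:ℝ) / 3 + ℓ < ∑ i, |x i|)
        ∪ (ternF n).filter (fun x => (∑ i, |x i|) < 2 * (n:ℝ) / 3 - ℓ) := by
    intro x hx
    rw [Finset.mem_filter, not_le] at hx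
    rw [Finset.mem_union, Finset.mem_filter, Finset.mem_filter]
    rcases abs_cases ((∑ i, |x i|) - 2 * (n:ℝ) / 3) with ⟨h1, _⟩ | ⟨h1, _⟩
    · exact Or.inl ⟨hx.1, by linarith [hx.2, h1.ge, h1.le]⟩
    · exact Or.inr ⟨hx.1, by linarith [hx.2, h1.ge, h1.le]⟩
  have hu : (((ternF n).filter (fun x => 2 * (n:ℝ) / 3 + ℓ < ∑ i, |x i|)).card : ℝ)
      ≤ Real.exp (-ℓ ^ 2 / (2 * n)) * 3 ^ n := by
    calc (((ternF n).filter (fun x => 2 * (n:ℝ) / 3 + ℓ < ∑ i, |x i|)).card : ℝ)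
        ≤ Real.exp (-(t * (2 * (n:ℝ) / 3 + ℓ))) * (1 + 2 * Real.exp t) ^ n :=
          upper_tail n t _ ht0
      _ ≤ Real.exp (-(t * (2 * (n:ℝ) / 3 + ℓ))) * (3 * Real.exp (2 * t / 3 + 2 * t ^ 2 / 9)) ^ n := by
          have := mgf_upper ht0 ht1
          gcongr
      _ ≤ Real.exp (-ℓ ^ 2 / (2 * n)) * 3 ^ n := by
          refine hmain _ _ ?_
          have heq : -(t * (2 * (n:ℝ) / 3 + ℓ)) + n * (2 * t / 3 + 2 * t ^ 2 / 9)
              = -(7 * ℓ ^ 2) / (9 * n) := by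
            rw [htdef]; field_simp; ring
          rw [heq, div_le_div_iff₀ (by positivity) (by positivity)]
          nlinarith [sq_nonneg ℓ]
  have hl : (((ternF n).filter (fun x => (∑ i, |x i|) < 2 * (n:ℝ) / 3 - ℓ)).card : ℝ)
      ≤ Real.exp (-ℓ ^ 2 / (2 * n)) * 3 ^ n := by
    calc (((ternF n).filter (fun x => (∑ i, |x i|) < 2 * (n:ℝ) / 3 - ℓ)).card : ℝ)
        ≤ Real.exp (t * (2 * (n:ℝ) / 3 - ℓ)) * (1 + 2 * Real.exp (-t)) ^ n :=
          lower_tail n t _ ht0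
      _ ≤ Real.exp (t * (2 * (n:ℝ) / 3 - ℓ)) * (3 * Real.exp (-(2 * t / 3) + 2 * t ^ 2 / 9)) ^ n := by
          have := mgf_lower ht0 ht1
          gcongr
      _ ≤ Real.exp (-ℓ ^ 2 / (2 * n)) * 3 ^ n := by
          refine hmain _ _ ?_
          have heq : t * (2 * (n:ℝ) / 3 - ℓ) + n * (-(2 * t / 3) + 2 * t ^ 2 / 9)
              = -(7 * ℓ ^ 2) / (9 * n) := by
            rw [htdef]; field_simp; ring
          rw [heq, div_le_div_iff₀ (by positivity) (by positivity)]
          nlinarith [sq_nonneg ℓ]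
  calc (((ternF n).filter (fun x => ¬ |(∑ i, |x i|) - 2 * (n:ℝ) / 3| ≤ ℓ)).card : ℝ)
      ≤ ((((ternF n).filter (fun x => 2 * (n:ℝ) / 3 + ℓ < ∑ i, |x i|))
          ∪ ((ternF n).filter (fun x => (∑ i, |x i|) < 2 * (n:ℝ) / 3 - ℓ))).card : ℝ) := by
        exact_mod_cast Finset.card_le_card hsplit
    _ ≤ (((ternF n).filter (fun x => 2 * (n:ℝ) / 3 + ℓ < ∑ i, |x i|)).card : ℝ)
        + (((ternF n).filter (fun x => (∑ i, |x i|) < 2 * (n:ℝ) / 3 - ℓ)).card : ℝ) := by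
        exact_mod_cast Finset.card_union_le _ _
    _ ≤ 2 * Real.exp (-ℓ ^ 2 / (2 * n)) * 3 ^ n := by linarith

/-- If `ε ≤ dist(S, convex)` and `ℓ = √(2n·ln(8/ε))`, then at least `(ε/2)·3^n` points of
`Mid(ℓ)` lie outside `S` but inside the convex hull of `S ∩ Mid(ℓ)`. -/
theorem stmt_15 (n : ℕ) (S : Set (Fin n → ℝ)) (hS : S ⊆ ternarySet n)
    (ε : ℝ) (hε : 0 < ε)
    (hfar : ∀ T : Set (Fin n → ℝ), T ⊆ ternarySet n →
      T = convexHull ℝ T ∩ ternarySet n →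
      ε ≤ (((S \ T) ∪ (T \ S)).ncard : ℝ) / 3 ^ n) :
    (ε / 2) * 3 ^ n ≤
      ((convexHull ℝ (S ∩ midLayers n (Real.sqrt (2 * n * Real.log (8 / ε)))) ∩
          (midLayers n (Real.sqrt (2 * n * Real.log (8 / ε))) \ S)).ncard : ℝ) := by
  set ℓ : ℝ := Real.sqrt (2 * n * Real.log (8 / ε)) with hℓdef
  set M : Set (Fin n → ℝ) := midLayers n ℓ with hMdef
  have hℓ0 : 0 ≤ ℓ := Real.sqrt_nonneg _
  have h3pos : (0 : ℝ) < 3 ^ n := by positivity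
  have hMsub : M ⊆ ternarySet n := fun x hx => hx.1
  -- ε ≤ 1
  have hε1 : ε ≤ 1 := by
    have hconv : ternarySet n = convexHull ℝ (ternarySet n) ∩ ternarySet n :=
      (Set.subset_inter (subset_convexHull ℝ _) subset_rfl).antisymm Set.inter_subset_right
    have h1 := hfar (ternarySet n) subset_rfl hconv
    have h2 : (S \ ternarySet n) ∪ (ternarySet n \ S) ⊆ ternarySet n := by
      intro x hx
      rcases hx with h | h
      · exact absurd (hS h.1) h.2
      · exact h.1
    have h3 : (((S \ ternarySet n) ∪ (ternarySet n \ S)).ncard : ℝ) ≤ 3 ^ n := by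
      have := Set.ncard_le_ncard h2 (tern_finite n)
      rw [ncard_tern] at this
      exact_mod_cast this
    have h4 : (((S \ ternarySet n) ∪ (ternarySet n \ S)).ncard : ℝ) / 3 ^ n ≤ 1 :=
      (div_le_one h3pos).mpr h3
    linarith
  -- counting bound on the complement of the middle layers
  have hdiffcount : ((ternarySet n \ M).ncard : ℝ) ≤ ε / 2 * 3 ^ n := by
    by_cases hcase : 2 * (n : ℝ) / 3 ≤ ℓ
    · have hempty : ternarySet n \ M = ∅ := by
        ext x
        simp only [Set.mem_diff, Set.mem_empty_iff_false, iff_false, not_and, not_not, hMdef]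
        intro hx
        refine ⟨hx, ?_⟩
        obtain ⟨hl, hu⟩ := sum_abs_bounds hx
        rw [abs_le]
        constructor <;> nlinarith [Nat.cast_nonneg (α := ℝ) n]
      rw [hempty]
      simp only [Set.ncard_empty, Nat.cast_zero]
      positivity
    · push_neg at hcase
      have hn : 0 < n := by
        rcases Nat.eq_zero_or_pos n with h | h
        · subst h; norm_num at hcase; linarith
        · exact h
      have hnn : (0 : ℝ) < n := by exact_mod_cast hn
      have hset : ternarySet n \ M
          = ↑((ternF n).filter (fun x => ¬ |(∑ i, |x i|) - 2 * (n : ℝ) / 3| ≤ ℓ)) := by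
        ext x
        simp only [Set.mem_diff, Finset.coe_filter, Set.mem_setOf_eq, mem_ternF, hMdef,
          midLayers, ternarySet]
        tauto
      rw [hset, Set.ncard_coe_finset]
      have hℓn : ℓ ≤ (n : ℝ) := by linarith
      have htail := tail_card n hn ℓ hℓ0 hℓn
      have hlog : 0 ≤ Real.log (8 / ε) := Real.log_nonneg (by rw [le_div_iff₀ hε]; linarith)
      have hsq : ℓ ^ 2 = 2 * n * Real.log (8 / ε) := by
        rw [hℓdef, Real.sq_sqrt (by positivity)]
      have hexp : Real.exp (-ℓ ^ 2 / (2 * n)) = ε / 8 := by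
        rw [hsq]
        have h5 : -(2 * (n : ℝ) * Real.log (8 / ε)) / (2 * n) = -Real.log (8 / ε) := by
          field_simp
        rw [h5, Real.exp_neg, Real.exp_log (by positivity), inv_div]
      rw [hexp] at htail
      calc ((((ternF n).filter (fun x => ¬ |(∑ i, |x i|) - 2 * (n : ℝ) / 3| ≤ ℓ)).card : ℝ))
          ≤ 2 * (ε / 8) * 3 ^ n := htail
        _ ≤ ε / 2 * 3 ^ n := by nlinarith
  -- the geometric argument
  set T : Set (Fin n → ℝ) := convexHull ℝ (S ∩ M) ∩ ternarySet n with hTdef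
  have hTsub : T ⊆ ternarySet n := Set.inter_subset_right
  have hTconv : T = convexHull ℝ T ∩ ternarySet n := by
    apply Set.Subset.antisymm
    · exact Set.subset_inter (subset_convexHull ℝ T) hTsub
    · intro x hx
      refine ⟨?_, hx.2⟩
      have h1 : convexHull ℝ T ⊆ convexHull ℝ (convexHull ℝ (S ∩ M)) :=
        convexHull_mono Set.inter_subset_left
      rw [(convex_convexHull ℝ (S ∩ M)).convexHull_eq] at h1
      exact h1 hx.1
  have hfarT := hfar T hTsub hTconv
  rw [le_div_iff₀ h3pos] at hfarT
  have hsub : (S \ T) ∪ (T \ S) ⊆ (convexHull ℝ (S ∩ M) ∩ (M \ S)) ∪ (ternarySet n \ M) := by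
    intro x hx
    rcases hx with ⟨hxS, hxT⟩ | ⟨hxT, hxS⟩
    · by_cases hxM : x ∈ M
      · exact absurd ⟨subset_convexHull ℝ (S ∩ M) ⟨hxS, hxM⟩, hS hxS⟩ hxT
      · exact Or.inr ⟨hS hxS, hxM⟩
    · by_cases hxM : x ∈ M
      · exact Or.inl ⟨hxT.1, hxM, hxS⟩
      · exact Or.inr ⟨hxT.2, hxM⟩
  have htarget_fin : (convexHull ℝ (S ∩ M) ∩ (M \ S)).Finite :=
    (tern_finite n).subset (fun x hx => hMsub hx.2.1)
  have hdiff_fin : (ternarySet n \ M).Finite := (tern_finite n).diff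
  have hΔ : ((S \ T) ∪ (T \ S)).ncard
      ≤ (convexHull ℝ (S ∩ M) ∩ (M \ S)).ncard + (ternarySet n \ M).ncard := by
    calc ((S \ T) ∪ (T \ S)).ncard
        ≤ ((convexHull ℝ (S ∩ M) ∩ (M \ S)) ∪ (ternarySet n \ M)).ncard :=
          Set.ncard_le_ncard hsub (htarget_fin.union hdiff_fin)
      _ ≤ _ := Set.ncard_union_le _ _
  have hcast : (((S \ T) ∪ (T \ S)).ncard : ℝ)
      ≤ ((convexHull ℝ (S ∩ M) ∩ (M \ S)).ncard : ℝ) + ((ternarySet n \ M).ncard : ℝ) := by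
    exact_mod_cast hΔ
  linarith
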